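/- arXiv:2106.13728 — 3 statements merged into one kernel-verified Lean document; each statement's English description precedes it below -/
import Mathlib

section
/- Let d ≥ 1, m ∈ ℕ, let n ∈ ℝᵈ be nonzero, c ∈ ℝ, let H = {x ∈ ℝᵈ : ⟨x,n⟩ = c} be the corresponding hyperplane, and let U ⊆ H be nonempty and open in the subspace topology of H. Let p be a real polynomial in d variables of total degree at most m, and suppose that for every integer k with 0 ≤ k ≤ m, the k-th iterated directional derivative in the direction n of the polynomial function x ↦ p(x) vanishes at every point of U. Then p is the zero polynomial. -/
open scoped RealInnerProductSpace

open MvPolynomial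

lemma hasFDerivAt_mveval {d : ℕ} (q : MvPolynomial (Fin d) ℝ) (x : EuclideanSpace ℝ (Fin d)) :
    HasFDerivAt (fun y : EuclideanSpace ℝ (Fin d) => eval (fun i => y i) q)
      (∑ i, eval (fun j => x j) (pderiv i q) • (EuclideanSpace.proj i : EuclideanSpace ℝ (Fin d) →L[ℝ] ℝ)) x := by
  induction q using MvPolynomial.induction_on with
  | C a =>
      simp only [eval_C, pderiv_C, map_zero, zero_smul, Finset.sum_const_zero]
      exact hasFDerivAt_const a x
  | add p q hp hq =>
      have := hp.add hq
      simp only [map_add, add_smul, Finset.sum_add_distrib] at *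
      exact this
  | mul_X p i hp =>
      have hXi : HasFDerivAt (fun y : EuclideanSpace ℝ (Fin d) => y i)
          (EuclideanSpace.proj i : EuclideanSpace ℝ (Fin d) →L[ℝ] ℝ) x :=
by
        have h0 := (EuclideanSpace.proj (𝕜 := ℝ) i : EuclideanSpace ℝ (Fin d) →L[ℝ] ℝ).hasFDerivAt (x := x)
        have : (⇑(EuclideanSpace.proj (𝕜 := ℝ) i : EuclideanSpace ℝ (Fin d) →L[ℝ] ℝ)) = fun y : EuclideanSpace ℝ (Fin d) => y i := by
          funext y; simp
        rwa [this] at h0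
      have := hp.mul hXi
      simp only [eval_mul, eval_X]
      refine this.congr_fderiv (Eq.symm ?_)
      rw [Finset.smul_sum]
      have : ∀ j, eval (fun j => x j) (pderiv j (p * X i)) •
          (EuclideanSpace.proj j : EuclideanSpace ℝ (Fin d) →L[ℝ] ℝ)
          = (if j = i then eval (fun j => x j) p • (EuclideanSpace.proj i : EuclideanSpace ℝ (Fin d) →L[ℝ] ℝ) else 0)
            + x i • eval (fun j => x j) (pderiv j p) • (EuclideanSpace.proj j : EuclideanSpace ℝ (Fin d) →L[ℝ] ℝ) := by
        intro j
        rw [pderiv_mul]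
        simp only [pderiv_X, eval_add, eval_mul, eval_X]
        rcases eq_or_ne j i with rfl | hji
        · simp [Pi.single_eq_same, add_smul, smul_smul, mul_comm, add_comm]
        · simp [Pi.single_eq_of_ne hji.symm, hji, add_smul, smul_smul, mul_comm]
      rw [Finset.sum_congr rfl (fun j _ => this j), Finset.sum_add_distrib,
        Finset.sum_ite_eq' Finset.univ i, if_pos (Finset.mem_univ i)]

noncomputable def Dpoly {d : ℕ} (n : EuclideanSpace ℝ (Fin d)) (q : MvPolynomial (Fin d) ℝ) :
    MvPolynomial (Fin d) ℝ := ∑ i, C (n i) * pderiv i q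

lemma fderiv_mveval_apply {d : ℕ} (n : EuclideanSpace ℝ (Fin d)) (q : MvPolynomial (Fin d) ℝ)
    (x : EuclideanSpace ℝ (Fin d)) :
    fderiv ℝ (fun y : EuclideanSpace ℝ (Fin d) => eval (fun i => y i) q) x n
      = eval (fun i => x i) (Dpoly n q) := by
  rw [(hasFDerivAt_mveval q x).fderiv]
  simp [Dpoly, ContinuousLinearMap.sum_apply, mul_comm]

lemma iterD_eq {d : ℕ} (n : EuclideanSpace ℝ (Fin d)) (p : MvPolynomial (Fin d) ℝ) (k : ℕ) :
    ((fun f : EuclideanSpace ℝ (Fin d) → ℝ => fun y => fderiv ℝ f y n)^[k]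
      (fun y : EuclideanSpace ℝ (Fin d) => eval (fun i => y i) p))
    = fun x : EuclideanSpace ℝ (Fin d) => eval (fun i => x i) ((Dpoly n)^[k] p) := by
  induction k with
  | zero => rfl
  | succ k ih =>
      rw [Function.iterate_succ_apply', ih, Function.iterate_succ_apply']
      funext x
      exact fderiv_mveval_apply n _ x

noncomputable def linePoly {d : ℕ} (y n : EuclideanSpace ℝ (Fin d))
    (q : MvPolynomial (Fin d) ℝ) : Polynomial ℝ :=
  aeval (fun i => Polynomial.C (y i) + Polynomial.C (n i) * Polynomial.X) q

lemma linePoly_eval {d : ℕ} (y n : EuclideanSpace ℝ (Fin d)) (q : MvPolynomial (Fin d) ℝ)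
    (t : ℝ) : (linePoly y n q).eval t = eval (fun i => y i + t * n i) q := by
  unfold linePoly
  induction q using MvPolynomial.induction_on with
  | C a => simp
  | add p q hp hq => simp [hp, hq]
  | mul_X p i hp =>
      simp only [map_mul, aeval_X, Polynomial.eval_mul, Polynomial.eval_add,
        Polynomial.eval_C, Polynomial.eval_X, eval_mul, eval_X, hp]
      ring

lemma coord_add_smul {d : ℕ} (y n : EuclideanSpace ℝ (Fin d)) (s : ℝ) (i : Fin d) :
    (y + s • n) i = y i + s * n i := rfl

lemma line_hasDerivAt {d : ℕ} (y n : EuclideanSpace ℝ (Fin d)) (q : MvPolynomial (Fin d) ℝ)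
    (t : ℝ) :
    HasDerivAt (fun s : ℝ => eval (fun i => y i + s * n i) q)
      (eval (fun i => y i + t * n i) (Dpoly n q)) t := by
  have hline : HasDerivAt (fun s : ℝ => y + s • n) n t := by
    simpa using ((hasDerivAt_id t).smul_const n).const_add y
  have hf := hasFDerivAt_mveval q (y + t • n)
  have hcomp := hf.comp_hasDerivAt t hline
  refine hcomp.congr_deriv (Eq.symm ?_)
  all_goals simp [Dpoly, ContinuousLinearMap.sum_apply, coord_add_smul, mul_comm]

lemma derivative_linePoly {d : ℕ} (y n : EuclideanSpace ℝ (Fin d)) (q : MvPolynomial (Fin d) ℝ) :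
    Polynomial.derivative (linePoly y n q) = linePoly y n (Dpoly n q) := by
  apply Polynomial.funext
  intro t
  have h1 : (fun s : ℝ => (linePoly y n q).eval s)
      = fun s : ℝ => eval (fun i => y i + s * n i) q := by
    funext s; exact linePoly_eval y n q s
  calc (Polynomial.derivative (linePoly y n q)).eval t
      = deriv (fun s : ℝ => (linePoly y n q).eval s) t := (Polynomial.deriv _).symm
    _ = deriv (fun s : ℝ => eval (fun i => y i + s * n i) q) t := by rw [h1]
    _ = eval (fun i => y i + t * n i) (Dpoly n q) := (line_hasDerivAt y n q t).deriv
    _ = (linePoly y n (Dpoly n q)).eval t := (linePoly_eval y n _ t).symm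

lemma iterate_derivative_linePoly {d : ℕ} (y n : EuclideanSpace ℝ (Fin d))
    (p : MvPolynomial (Fin d) ℝ) (k : ℕ) :
    Polynomial.derivative^[k] (linePoly y n p) = linePoly y n ((Dpoly n)^[k] p) := by
  induction k with
  | zero => rfl
  | succ k ih => rw [Function.iterate_succ_apply', ih, derivative_linePoly,
      Function.iterate_succ_apply']

lemma natDegree_linePoly_le {d m : ℕ} (y n : EuclideanSpace ℝ (Fin d))
    (p : MvPolynomial (Fin d) ℝ) (hp : p.totalDegree ≤ m) :
    (linePoly y n p).natDegree ≤ m := by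
  have := MvPolynomial.aeval_natDegree_le p hp
    (fun i => Polynomial.C (y i) + Polynomial.C (n i) * Polynomial.X) (n := 1) ?_
  · simpa [linePoly] using this
  · intro i
    refine (Polynomial.natDegree_add_le _ _).trans ?_
    simp only [Polynomial.natDegree_C, max_le_iff]
    exact ⟨Nat.zero_le _, (Polynomial.natDegree_C_mul_le _ _).trans (by simp)⟩

lemma poly_eq_zero_of_derivs {m : ℕ} (Q : Polynomial ℝ) (hdeg : Q.natDegree ≤ m)
    (h : ∀ k : ℕ, k ≤ m → (Polynomial.derivative^[k] Q).eval 0 = 0) : Q = 0 := by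
  ext k
  rcases le_or_gt k m with hk | hk
  · have h0 := h k hk
    rw [← Polynomial.coeff_zero_eq_eval_zero, Polynomial.coeff_iterate_derivative] at h0
    simp only [zero_add, Nat.descFactorial_self, nsmul_eq_mul] at h0
    have : ((Nat.factorial k : ℝ)) ≠ 0 := by positivity
    simpa [this] using h0
  · simp [Polynomial.coeff_eq_zero_of_natDegree_lt (lt_of_le_of_lt hdeg hk)]


/-- If a polynomial of total degree at most `m` has all its iterated
directional derivatives in the direction `n`, up to order `m`, vanishing on a
nonempty relatively open subset of the hyperplane `{x | ⟪x, n⟫ = c}`, then it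
is the zero polynomial. -/
theorem stmt_2 (d m : ℕ) (hd : 1 ≤ d)
    (n : EuclideanSpace ℝ (Fin d)) (hn : n ≠ 0) (c : ℝ)
    (U : Set (EuclideanSpace ℝ (Fin d)))
    (hUsub : U ⊆ {x : EuclideanSpace ℝ (Fin d) | ⟪x, n⟫ = c})
    (hUne : U.Nonempty)
    (hUopen : IsOpen {x : {x : EuclideanSpace ℝ (Fin d) | ⟪x, n⟫ = c} |
      (x : EuclideanSpace ℝ (Fin d)) ∈ U})
    (p : MvPolynomial (Fin d) ℝ) (hp : p.totalDegree ≤ m)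
    (hvan : ∀ k : ℕ, k ≤ m → ∀ x ∈ U,
      ((fun f : EuclideanSpace ℝ (Fin d) → ℝ => fun y => fderiv ℝ f y n)^[k]
        (fun y : EuclideanSpace ℝ (Fin d) => MvPolynomial.eval (fun i => y i) p)) x = 0) :
    p = 0 := by
  classical
  let E := EuclideanSpace ℝ (Fin d)
  set f : E → ℝ := fun y => eval (fun i => y i) p with hf
  -- Step 1: f vanishes on every normal line through a point of U
  have hline : ∀ y ∈ U, ∀ t : ℝ, eval (fun i => y i + t * n i) p = 0 := by
    intro y hy t
    have hQ : linePoly y n p = 0 := by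
      apply poly_eq_zero_of_derivs (m := m) _ (natDegree_linePoly_le y n p hp)
      intro k hk
      rw [iterate_derivative_linePoly, linePoly_eval]
      have h0 := hvan k hk y hy
      rw [iterD_eq n p k] at h0
      simpa using h0
    have := linePoly_eval y n p t
    rw [hQ] at this
    simpa using this.symm
  -- Step 2: f vanishes in a neighbourhood of a point of U
  obtain ⟨x₀, hx₀⟩ := hUne
  have hnn : ‖n‖ ≠ 0 := norm_ne_zero_iff.mpr hn
  set r : E → ℝ := fun x => (⟪x, n⟫ - c) / (‖n‖ ^ 2) with hr
  set π : E → E := fun x => x - r x • n with hπ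
  have hπH : ∀ x : E, ⟪π x, n⟫ = c := by
    intro x
    simp only [hπ, hr, inner_sub_left, real_inner_smul_left, real_inner_self_eq_norm_sq]
    field_simp
    ring
  have hπcont : Continuous π := by
    apply continuous_id.sub
    simp only [hr]
    fun_prop
  set g : E → {x : E | ⟪x, n⟫ = c} := fun x => ⟨π x, hπH x⟩ with hg
  have hgcont : Continuous g := hπcont.subtype_mk _
  have hπx₀ : π x₀ = x₀ := by
    have hc : (⟪x₀, n⟫ : ℝ) = c := hUsub hx₀
    have : r x₀ = 0 := by simp [hr, hc]
    simp [hπ, this]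
  have hWopen : IsOpen (g ⁻¹' {x : {x : E | ⟪x, n⟫ = c} | (x : E) ∈ U}) :=
    hUopen.preimage hgcont
  have hx₀W : x₀ ∈ g ⁻¹' {x : {x : E | ⟪x, n⟫ = c} | (x : E) ∈ U} := by
    simp only [Set.mem_preimage, hg, Set.mem_setOf_eq, hπx₀]
    exact hx₀
  have hfW : ∀ x ∈ g ⁻¹' {x : {x : E | ⟪x, n⟫ = c} | (x : E) ∈ U}, f x = 0 := by
    intro x hx
    have hyU : π x ∈ U := hx
    have hx' : x = π x + r x • n := by simp [hπ]
    have := hline (π x) hyU (r x)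
    show eval (fun i => x i) p = 0
    have hcoord : (fun i => x i) = fun i => (π x) i + r x * n i := by
      funext i
      conv_lhs => rw [hx']
      rfl
    rw [hcoord]
    exact this
  have hev : f =ᶠ[nhds x₀] 0 := by
    filter_upwards [hWopen.mem_nhds hx₀W] with x hx
    exact hfW x hx
  -- Step 3: f is analytic, so it vanishes everywhere
  have hanal : AnalyticOnNhd ℝ f Set.univ := by
    have := AnalyticOnNhd.eval_continuousLinearMap
      ((PiLp.continuousLinearEquiv 2 ℝ (fun _ : Fin d => ℝ)).toContinuousLinearMap) p
    exact this
  have hzero : Set.EqOn f 0 Set.univ :=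
    hanal.eqOn_zero_of_preconnected_of_eventuallyEq_zero isPreconnected_univ
      (Set.mem_univ x₀) hev
  -- Step 4: conclude
  apply MvPolynomial.funext
  intro z
  have := hzero (Set.mem_univ ((WithLp.equiv 2 (Fin d → ℝ)).symm z))
  simpa [hf] using this
end

section
/- Let V be a finite-dimensional real inner product space, let a : V × V → ℝ be a bilinear form with a(u,u) ≥ α‖u‖² for some α > 0 and all u ∈ V, let s : V × V → ℝ be a symmetric bilinear form with s(u,u) ≥ 0 for all u ∈ V, and let b : V → ℝ be linear. Set W := {w ∈ V : s(w,w) = 0}. For γ > 0 let u_γ ∈ V be the unique element with a(u_γ,v) + γ·s(u_γ,v) = b(v) for all v ∈ V, and let u_∞ ∈ W be the unique element with a(u_∞,w) = b(w) for all w ∈ W. Then u_γ converges to u_∞ as γ → ∞. -/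
open Filter

set_option maxHeartbeats 1000000

/-- Convergence of the penalised solutions to the constrained (aggregated)
solution as the penalty parameter tends to infinity. -/
theorem stmt_3 (V : Type*) [NormedAddCommGroup V] [InnerProductSpace ℝ V]
    [FiniteDimensional ℝ V]
    (a s : V →ₗ[ℝ] V →ₗ[ℝ] ℝ) (α : ℝ) (hα : 0 < α)
    (ha : ∀ u : V, α * ‖u‖ ^ 2 ≤ a u u)
    (hs_symm : ∀ u v : V, s u v = s v u)
    (hs_pos : ∀ u : V, 0 ≤ s u u)
    (b : V →ₗ[ℝ] ℝ)
    (u : ℝ → V)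
    (hu : ∀ γ : ℝ, 0 < γ → ∀ v : V, a (u γ) v + γ * s (u γ) v = b v)
    (uinf : V) (huinf_mem : s uinf uinf = 0)
    (huinf : ∀ w : V, s w w = 0 → a uinf w = b w) :
    Tendsto u atTop (nhds uinf) := by
  classical
  -- degenerate kernel lemma: s w w = 0 → s w v = 0 for all v
  have hszero : ∀ w : V, s w w = 0 → ∀ v : V, s w v = 0 := by
    intro w hw v
    have hd0 : 0 ≤ s v v := hs_pos v
    have key : ∀ t : ℝ, 0 ≤ 2 * t * s w v + t ^ 2 * s v v := by
      intro t
      have h := hs_pos (w + t • v)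
      simp only [map_add, map_smul, LinearMap.add_apply, LinearMap.smul_apply,
        smul_eq_mul, hw] at h
      rw [hs_symm v w] at h
      nlinarith [h]
    by_contra hcne
    have hd1 : (0:ℝ) < s v v + 1 := by linarith
    have h1 := key (-(s w v / (s v v + 1)))
    have hc2 : 0 < s w v ^ 2 := by positivity
    have h3 : 2 * (-(s w v / (s v v + 1))) * s w v
        + (-(s w v / (s v v + 1))) ^ 2 * s v v
        = -(s w v ^ 2 * (s v v + 2)) / ((s v v + 1) ^ 2) := by
      field_simp
      ring
    rw [h3] at h1
    have h4 : (0:ℝ) < (s v v + 1) ^ 2 := by positivity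
    rw [le_div_iff₀ h4] at h1
    nlinarith
  -- the constraint subspace
  set W : Submodule ℝ V := LinearMap.ker s with hWdef
  have hWmem : ∀ w : V, w ∈ W ↔ s w w = 0 := by
    intro w
    constructor
    · intro h
      have : s w = 0 := LinearMap.mem_ker.mp h
      simp [this]
    · intro h
      exact LinearMap.mem_ker.mpr (LinearMap.ext fun v => hszero w h v)
  -- bounds on the bilinear/linear forms
  obtain ⟨Ca, hCa0, haBound⟩ : ∃ C : ℝ, 0 ≤ C ∧ ∀ x y : V, a x y ≤ C * ‖x‖ * ‖y‖ := by
    let aC : V →L[ℝ] V →L[ℝ] ℝ :=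
      LinearMap.toContinuousLinearMap
        ((LinearMap.toContinuousLinearMap :
          (V →ₗ[ℝ] ℝ) ≃ₗ[ℝ] (V →L[ℝ] ℝ)).toLinearMap ∘ₗ a)
    have haC : ∀ x y : V, aC x y = a x y := fun x y => rfl
    refine ⟨‖aC‖, ContinuousLinearMap.opNorm_nonneg aC, fun x y => ?_⟩
    calc a x y = aC x y := (haC x y).symm
    _ ≤ ‖aC x‖ * ‖y‖ := le_trans (le_abs_self _) ((aC x).le_opNorm y)
    _ ≤ ‖aC‖ * ‖x‖ * ‖y‖ :=
        mul_le_mul_of_nonneg_right (aC.le_opNorm x) (norm_nonneg y)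
  obtain ⟨Cb, hCb0, hbBound⟩ : ∃ C : ℝ, 0 ≤ C ∧ ∀ x : V, b x ≤ C * ‖x‖ := by
    let bC : V →L[ℝ] ℝ := LinearMap.toContinuousLinearMap b
    have hbC : ∀ x : V, bC x = b x := fun x => rfl
    refine ⟨‖bC‖, ContinuousLinearMap.opNorm_nonneg bC, fun x => ?_⟩
    calc b x = bC x := (hbC x).symm
    _ ≤ ‖bC‖ * ‖x‖ := le_trans (le_abs_self _) (bC.le_opNorm x)
  -- coercivity of s on Wᗮ
  obtain ⟨β, hβpos, hβ⟩ : ∃ β > 0, ∀ q : V, q ∈ Wᗮ → β * ‖q‖ ^ 2 ≤ s q q := by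
    by_cases hbot : Wᗮ = ⊥
    · refine ⟨1, one_pos, fun q hq => ?_⟩
      rw [hbot, Submodule.mem_bot] at hq
      simp [hq]
    · obtain ⟨x, hxW, hxne⟩ := Submodule.exists_mem_ne_zero_of_ne_bot hbot
      set K : Set V := Metric.sphere (0 : V) 1 ∩ (Wᗮ : Set V) with hKdef
      have hKc : IsCompact K :=
        (isCompact_sphere 0 1).inter_right (Submodule.closed_of_finiteDimensional _)
      have hKne : K.Nonempty := by
        refine ⟨‖x‖⁻¹ • x, ?_, Submodule.smul_mem _ _ hxW⟩
        simp [norm_smul, norm_ne_zero_iff.mpr hxne,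
          inv_mul_cancel₀ (norm_ne_zero_iff.mpr hxne)]
      have hfc : ContinuousOn (fun q => s q q) K := by
        let sC : V →L[ℝ] V →L[ℝ] ℝ :=
          LinearMap.toContinuousLinearMap
            ((LinearMap.toContinuousLinearMap :
              (V →ₗ[ℝ] ℝ) ≃ₗ[ℝ] (V →L[ℝ] ℝ)).toLinearMap ∘ₗ s)
        have : Continuous fun q : V => sC q q :=
          sC.continuous.clm_apply continuous_id
        exact this.continuousOn
      obtain ⟨x0, hx0K, hx0min⟩ := hKc.exists_isMinOn hKne hfc
      have hx0sphere : ‖x0‖ = 1 := by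
        have := hx0K.1
        simpa using this
      have hx0W : x0 ∈ Wᗮ := hx0K.2
      have hx0pos : 0 < s x0 x0 := by
        rcases lt_or_eq_of_le (hs_pos x0) with h | h
        · exact h
        · exfalso
          have hx0mem : x0 ∈ W := (hWmem x0).mpr h.symm
          have hzero : (inner ℝ x0 x0 : ℝ) = 0 :=
            (Submodule.mem_orthogonal W x0).mp hx0W x0 hx0mem
          have : x0 = 0 := inner_self_eq_zero.mp hzero
          rw [this] at hx0sphere
          simp at hx0sphere
      refine ⟨s x0 x0, hx0pos, fun q hq => ?_⟩
      rcases eq_or_ne q 0 with rfl | hqne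
      · simp
      · have hqn : (0:ℝ) < ‖q‖ := norm_pos_iff.mpr hqne
        have hqK : ‖q‖⁻¹ • q ∈ K :=
          ⟨by simp [norm_smul, inv_mul_cancel₀ hqn.ne'], Submodule.smul_mem _ _ hq⟩
        have hmin := (isMinOn_iff.mp hx0min) _ hqK
        simp only [map_smul, LinearMap.smul_apply, smul_eq_mul] at hmin
        have h5 := mul_le_mul_of_nonneg_right hmin (sq_nonneg ‖q‖)
        have h6 : ‖q‖⁻¹ * (‖q‖⁻¹ * s q q) * ‖q‖ ^ 2 = s q q := by
          rw [pow_two]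
          field_simp
        linarith
  -- bound on u γ
  set R : ℝ := Cb / α with hRdef
  have hR0 : 0 ≤ R := div_nonneg hCb0 hα.le
  have huR : ∀ γ : ℝ, 0 < γ → ‖u γ‖ ≤ R := by
    intro γ hγ
    have h1 : α * ‖u γ‖ ^ 2 ≤ Cb * ‖u γ‖ := by
      have h2 := hu γ hγ (u γ)
      have h3 := mul_nonneg hγ.le (hs_pos (u γ))
      have h4 := ha (u γ)
      have h5 := hbBound (u γ)
      linarith
    rcases eq_or_lt_of_le (norm_nonneg (u γ)) with h | h
    · rw [← h]; exact hR0
    · rw [hRdef, le_div_iff₀ hα]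
      nlinarith
  -- bound on s (u γ) (u γ)
  set M : ℝ := Cb * R + Ca * R ^ 2 with hMdef
  have hM0 : 0 ≤ M := by positivity
  have husM : ∀ γ : ℝ, 0 < γ → s (u γ) (u γ) ≤ M / γ := by
    intro γ hγ
    rw [le_div_iff₀ hγ]
    have h2 := hu γ hγ (u γ)
    have h4 := ha (u γ)
    have h5 := hbBound (u γ)
    have h6 := huR γ hγ
    have h7 : a (u γ) (u γ) ≥ 0 := le_trans (by positivity) h4
    have h8 : Cb * ‖u γ‖ ≤ Cb * R := mul_le_mul_of_nonneg_left h6 hCb0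
    have h10 : 0 ≤ Ca * R ^ 2 := mul_nonneg hCa0 (sq_nonneg R)
    linarith [hMdef, h10]
  -- key quantitative estimate
  have hKey : ∀ γ : ℝ, 0 < γ →
      ‖u γ - uinf‖ ≤ (1 + Ca / α) * Real.sqrt (M / (β * γ)) := by
    intro γ hγ
    obtain ⟨w, hwW, q, hqperp, huγ⟩ :
        ∃ w ∈ W, ∃ q ∈ Wᗮ, u γ = w + q :=
      ⟨W.orthogonalProjection (u γ), (W.orthogonalProjection (u γ)).2,
        u γ - W.orthogonalProjection (u γ),
        W.sub_starProjection_mem_orthogonal (u γ), by abel⟩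
    -- s (u γ) (u γ) = s q q
    have hsq : s (u γ) (u γ) = s q q := by
      have hw0 : ∀ v : V, s w v = 0 := hszero w ((hWmem w).mp hwW)
      have hw0' : ∀ v : V, s v w = 0 := fun v => by rw [hs_symm]; exact hw0 v
      rw [huγ]
      simp [map_add, hw0, hw0' q]
    have hqbound : β * ‖q‖ ^ 2 ≤ M / γ := le_trans (hβ q hqperp)
      (by rw [← hsq]; exact husM γ hγ)
    have hqnorm : ‖q‖ ≤ Real.sqrt (M / (β * γ)) := by
      have h1 : ‖q‖ ^ 2 ≤ M / (β * γ) := by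
        rw [mul_comm β γ, ← div_div, le_div_iff₀ hβpos]
        linarith [hqbound]
      calc ‖q‖ = Real.sqrt (‖q‖ ^ 2) := by
            rw [Real.sqrt_sq (norm_nonneg q)]
      _ ≤ Real.sqrt (M / (β * γ)) := Real.sqrt_le_sqrt h1
    -- Galerkin orthogonality on W
    have hgal : ∀ v : V, v ∈ W → a (u γ) v = b v := by
      intro v hv
      have hsv : s (u γ) v = 0 := by
        rw [hs_symm]; exact hszero v ((hWmem v).mp hv) (u γ)
      have := hu γ hγ v
      rw [hsv] at this
      linarith
    -- estimate w - uinf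
    have huinfW : uinf ∈ W := (hWmem uinf).mpr huinf_mem
    set e : V := w - uinf with hedef
    have heW : e ∈ W := W.sub_mem hwW huinfW
    have heeq : a e e = - a q e := by
      have h1 : a (u γ) e = b e := hgal e heW
      have h2 : a uinf e = b e := huinf e ((hWmem e).mp heW)
      have h4 : a (u γ) e = a q e + a w e := by
        rw [huγ]; simp [map_add]; ring
      have h5 : a w e = a e e + a uinf e := by
        have : w = e + uinf := by rw [hedef]; abel
        rw [this]; simp [map_add]
      linarith
    have heineq : α * ‖e‖ ^ 2 ≤ Ca * ‖q‖ * ‖e‖ := by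
      have h1 := ha e
      have h2 : - a q e ≤ Ca * ‖q‖ * ‖e‖ := by
        have := haBound q (-e)
        simp only [map_neg] at this
        calc -a q e ≤ Ca * ‖q‖ * ‖-e‖ := by
              have h3 := haBound q (-e)
              simpa using h3
        _ = Ca * ‖q‖ * ‖e‖ := by rw [norm_neg]
      linarith [heeq ▸ h1]
    have henorm : ‖e‖ ≤ (Ca / α) * ‖q‖ := by
      rcases eq_or_lt_of_le (norm_nonneg e) with h | h
      · rw [← h]; positivity
      · rw [div_mul_eq_mul_div, le_div_iff₀ hα]
        nlinarith
    -- combine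
    have hsum : ‖u γ - uinf‖ ≤ ‖q‖ + ‖e‖ := by
      have : u γ - uinf = q + e := by rw [huγ, hedef]; abel
      rw [this]
      exact norm_add_le q e
    have hq0 : 0 ≤ Real.sqrt (M / (β * γ)) := Real.sqrt_nonneg _
    have hcoef : 0 ≤ Ca / α := by positivity
    calc ‖u γ - uinf‖ ≤ ‖q‖ + ‖e‖ := hsum
    _ ≤ ‖q‖ + (Ca / α) * ‖q‖ := by linarith
    _ = (1 + Ca / α) * ‖q‖ := by ring
    _ ≤ (1 + Ca / α) * Real.sqrt (M / (β * γ)) := by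
        apply mul_le_mul_of_nonneg_left hqnorm
        positivity
  -- conclude by squeezing
  rw [tendsto_iff_norm_sub_tendsto_zero]
  have hg : Tendsto (fun γ : ℝ => (1 + Ca / α) * Real.sqrt (M / (β * γ)))
      atTop (nhds 0) := by
    have h1 : Tendsto (fun γ : ℝ => M / (β * γ)) atTop (nhds 0) := by
      have h2 : Tendsto (fun γ : ℝ => β * γ) atTop atTop :=
        Tendsto.const_mul_atTop hβpos tendsto_id
      exact Filter.Tendsto.div_atTop tendsto_const_nhds h2
    have h3 : Tendsto (fun γ : ℝ => Real.sqrt (M / (β * γ))) atTop (nhds 0) := by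
      have h0 := (Real.continuous_sqrt.tendsto 0).comp h1
      simp only [Function.comp_def, Real.sqrt_zero] at h0
      exact h0
    have h4 := h3.const_mul (1 + Ca / α)
    rw [mul_zero] at h4
    exact h4
  refine squeeze_zero' ?_ ?_ hg
  · filter_upwards with γ
    positivity
  · filter_upwards [eventually_gt_atTop (0:ℝ)] with γ hγ using hKey γ hγ
end

section
/- Let A be a real symmetric positive definite n×n matrix and S a real symmetric positive semidefinite n×n matrix with S ≠ 0 and with a nonzero vector x₀ satisfying S·x₀ = 0. Then for every γ > 0 the matrix A + γS is invertible and its spectral condition number κ₂(A + γS) := ‖A + γS‖₂·‖(A + γS)⁻¹‖₂ (operator norms induced by the Euclidean norm) satisfies κ₂(A + γS) ≥ γ·‖S‖₂ / ‖A‖₂. -/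
set_option maxHeartbeats 1000000
set_option synthInstance.maxHeartbeats 200000


open scoped Matrix

local notation "⟪" x ", " y "⟫" => @inner ℝ _ _ x y

private lemma aux_inner_toE {n : ℕ} (M : Matrix (Fin n) (Fin n) ℝ)
    (x y : EuclideanSpace ℝ (Fin n)) :
    ⟪Matrix.toEuclideanCLM (𝕜 := ℝ) M x, y⟫ =
      (M.mulVec (fun i => x i)) ⬝ᵥ (fun i => y i) := by
  simp [PiLp.inner_apply, RCLike.inner_apply, dotProduct]
  exact Finset.sum_congr rfl (fun i _ => mul_comm _ _)

private lemma aux_apply_toE {n : ℕ} (M : Matrix (Fin n) (Fin n) ℝ)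
    (x : EuclideanSpace ℝ (Fin n)) (i : Fin n) :
    (Matrix.toEuclideanCLM (𝕜 := ℝ) M x) i = M.mulVec (fun j => x j) i := rfl

/-- Cauchy–Schwarz for a positive semidefinite symmetric bilinear form given by a matrix. -/
private lemma aux_cs {n : ℕ} (Q : Matrix (Fin n) (Fin n) ℝ)
    (hQ : ∀ x, 0 ≤ x ⬝ᵥ Q.mulVec x) (hQs : ∀ x y, Q.mulVec x ⬝ᵥ y = x ⬝ᵥ Q.mulVec y)
    (u v : Fin n → ℝ) :
    (Q.mulVec u ⬝ᵥ v) ^ 2 ≤ (u ⬝ᵥ Q.mulVec u) * (v ⬝ᵥ Q.mulVec v) := by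
  have h : ∀ t : ℝ, 0 ≤ (v ⬝ᵥ Q.mulVec v) * (t * t)
      + (2 * (Q.mulVec u ⬝ᵥ v)) * t + (u ⬝ᵥ Q.mulVec u) := by
    intro t
    have h0 := hQ (u + t • v)
    simp only [Matrix.mulVec_add, Matrix.mulVec_smul, dotProduct_add,
      add_dotProduct, dotProduct_smul, smul_dotProduct,
      smul_eq_mul] at h0
    have hq1 : u ⬝ᵥ Q.mulVec v = Q.mulVec u ⬝ᵥ v := (hQs u v).symm
    have hq2 : v ⬝ᵥ Q.mulVec u = Q.mulVec u ⬝ᵥ v := dotProduct_comm _ _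
    rw [hq1, hq2] at h0
    nlinarith [h0]
  have hd := discrim_le_zero h
  rw [discrim] at hd
  nlinarith [hd]

/-- If `P, Q` are positive semidefinite (as quadratic forms, with `Q` symmetric), then
`‖Q‖ ≤ ‖P + Q‖` in the Euclidean operator norm. -/
private lemma aux_norm_le {n : ℕ} (P Q : Matrix (Fin n) (Fin n) ℝ)
    (hP : ∀ x, 0 ≤ x ⬝ᵥ P.mulVec x) (hQ : ∀ x, 0 ≤ x ⬝ᵥ Q.mulVec x)
    (hQs : ∀ x y, Q.mulVec x ⬝ᵥ y = x ⬝ᵥ Q.mulVec y) :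
    ‖Matrix.toEuclideanCLM (𝕜 := ℝ) Q‖ ≤ ‖Matrix.toEuclideanCLM (𝕜 := ℝ) (P + Q)‖ := by
  set q := Matrix.toEuclideanCLM (𝕜 := ℝ) Q with hq
  set b := Matrix.toEuclideanCLM (𝕜 := ℝ) (P + Q) with hb
  set c : ℝ := ‖b‖ * ‖q‖ with hc
  have hc0 : 0 ≤ c := mul_nonneg (norm_nonneg _) (norm_nonneg _)
  -- pointwise bound ‖q x‖² ≤ c * ‖x‖²
  have key : ∀ x : EuclideanSpace ℝ (Fin n), ‖q x‖ ^ 2 ≤ c * ‖x‖ ^ 2 := by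
    intro x
    set u : Fin n → ℝ := fun i => x i with hu
    set w : EuclideanSpace ℝ (Fin n) := q x with hw
    have hwu : (fun i => w i) = Q.mulVec u := by
      funext i; exact aux_apply_toE Q x i
    have ht : ‖q x‖ ^ 2 = Q.mulVec u ⬝ᵥ Q.mulVec u := by
      rw [← hw, ← real_inner_self_eq_norm_sq]
      rw [show ⟪w, w⟫ = (fun i => w i) ⬝ᵥ (fun i => w i) by
        simp only [PiLp.inner_apply, RCLike.inner_apply, dotProduct, conj_trivial]]
      rw [hwu]
    set t : ℝ := Q.mulVec u ⬝ᵥ Q.mulVec u with htd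
    have ht0 : 0 ≤ t := by rw [← ht]; positivity
    -- Cauchy–Schwarz applied with vectors u and Q u
    have hcs := aux_cs Q hQ hQs u (Q.mulVec u)
    have h1 : Q.mulVec u ⬝ᵥ Q.mulVec u = t := rfl
    -- F u u ≤ ‖b‖ ‖x‖²
    have h2 : u ⬝ᵥ Q.mulVec u ≤ ‖b‖ * ‖x‖ ^ 2 := by
      have hinner : ⟪b x, x⟫ = ((P + Q).mulVec u) ⬝ᵥ u := aux_inner_toE (P + Q) x x
      have hsplit : ((P + Q).mulVec u) ⬝ᵥ u = (P.mulVec u) ⬝ᵥ u + (Q.mulVec u) ⬝ᵥ u := by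
        rw [Matrix.add_mulVec, add_dotProduct]
      have hPu : 0 ≤ (P.mulVec u) ⬝ᵥ u := by
        rw [dotProduct_comm]; exact hP u
      have hQu : u ⬝ᵥ Q.mulVec u = (Q.mulVec u) ⬝ᵥ u := dotProduct_comm _ _
      have hub : ⟪b x, x⟫ ≤ ‖b‖ * ‖x‖ ^ 2 := by
        calc ⟪b x, x⟫ ≤ ‖b x‖ * ‖x‖ := real_inner_le_norm _ _
          _ ≤ (‖b‖ * ‖x‖) * ‖x‖ := by
              exact mul_le_mul_of_nonneg_right (b.le_opNorm x) (norm_nonneg _)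
          _ = ‖b‖ * ‖x‖ ^ 2 := by ring
      nlinarith [hub, hinner, hsplit, hPu, hQu]
    -- F (Qu) (Qu) ≤ ‖q‖ t
    have h3 : Q.mulVec u ⬝ᵥ Q.mulVec (Q.mulVec u) ≤ ‖q‖ * t := by
      have hwu' : Q.mulVec u = (fun i => w i) := hwu.symm
      have hinner : ⟪q w, w⟫ = (Q.mulVec (fun i => w i)) ⬝ᵥ (fun i => w i) :=
        aux_inner_toE Q w w
      have hnw : ‖w‖ ^ 2 = t := by rw [← ht, hw]
      have hub : ⟪q w, w⟫ ≤ ‖q‖ * t := by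
        calc ⟪q w, w⟫ ≤ ‖q w‖ * ‖w‖ := real_inner_le_norm _ _
          _ ≤ (‖q‖ * ‖w‖) * ‖w‖ :=
              mul_le_mul_of_nonneg_right (q.le_opNorm w) (norm_nonneg _)
          _ = ‖q‖ * ‖w‖ ^ 2 := by ring
          _ = ‖q‖ * t := by rw [hnw]
      have heq : Q.mulVec u ⬝ᵥ Q.mulVec (Q.mulVec u)
          = (Q.mulVec (fun i => w i)) ⬝ᵥ (fun i => w i) := by
        rw [hwu]
        exact dotProduct_comm _ _
      rw [heq, ← hinner]
      exact hub
    -- combine : t² ≤ (‖b‖‖x‖²)(‖q‖ t)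
    have hcomb : t ^ 2 ≤ (‖b‖ * ‖x‖ ^ 2) * (‖q‖ * t) := by
      have hQuu : 0 ≤ u ⬝ᵥ Q.mulVec u := hQ u
      have hQww : 0 ≤ Q.mulVec u ⬝ᵥ Q.mulVec (Q.mulVec u) := hQ (Q.mulVec u)
      nlinarith [hcs, h2, h3, hQuu, hQww]
    rcases eq_or_lt_of_le ht0 with h0 | h0
    · rw [ht, ← h0]
      positivity
    · rw [ht]
      have h4 : t * t ≤ (c * ‖x‖ ^ 2) * t := by
        rw [hc]; nlinarith [hcomb]
      exact le_of_mul_le_mul_right h4 h0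
  -- conclude ‖q‖ ≤ √c and then ‖q‖ ≤ ‖b‖
  have hqn : ‖q‖ ≤ Real.sqrt c := by
    refine q.opNorm_le_bound (Real.sqrt_nonneg c) (fun x => ?_)
    have hx := key x
    have : ‖q x‖ = Real.sqrt (‖q x‖ ^ 2) := (Real.sqrt_sq (norm_nonneg _)).symm
    rw [this]
    calc Real.sqrt (‖q x‖ ^ 2) ≤ Real.sqrt (c * ‖x‖ ^ 2) := Real.sqrt_le_sqrt hx
      _ = Real.sqrt c * ‖x‖ := by
          rw [Real.sqrt_mul hc0, Real.sqrt_sq (norm_nonneg _)]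
  have hsq : ‖q‖ ^ 2 ≤ c := by
    nlinarith [Real.sq_sqrt hc0, Real.sqrt_nonneg c, norm_nonneg q, hqn]
  rcases eq_or_lt_of_le (norm_nonneg q) with h0 | h0
  · rw [← h0]; exact norm_nonneg _
  · nlinarith [hsq]

/-- Linear growth with γ of the condition number of the ghost-penalised matrix. -/
theorem stmt_7 (n : ℕ) (A S : Matrix (Fin n) (Fin n) ℝ)
    (hA : A.PosDef) (hS : S.PosSemidef) (hSne : S ≠ 0)
    (x₀ : Fin n → ℝ) (hx₀ : x₀ ≠ 0) (hSx₀ : S.mulVec x₀ = 0)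
    (γ : ℝ) (hγ : 0 < γ) :
    IsUnit (A + γ • S) ∧
      γ * ‖Matrix.toEuclideanCLM (𝕜 := ℝ) S‖ / ‖Matrix.toEuclideanCLM (𝕜 := ℝ) A‖ ≤
        ‖Matrix.toEuclideanCLM (𝕜 := ℝ) (A + γ • S)‖ *
          ‖Matrix.toEuclideanCLM (𝕜 := ℝ) (A + γ • S)⁻¹‖ := by
  have hγS : (γ • S).PosSemidef := by
    refine Matrix.PosSemidef.of_dotProduct_mulVec_nonneg ?_ (fun x => ?_)
    · show (γ • S).conjTranspose = γ • S
      rw [Matrix.conjTranspose_smul, hS.1]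
      simp
    · rw [Matrix.smul_mulVec, dotProduct_smul, smul_eq_mul]
      exact mul_nonneg hγ.le (hS.dotProduct_mulVec_nonneg x)
  have hB : (A + γ • S).PosDef := hA.add_posSemidef hγS
  have hBu : IsUnit (A + γ • S) := hB.isUnit
  refine ⟨hBu, ?_⟩
  set e := Matrix.toEuclideanCLM (𝕜 := ℝ) (n := Fin n)
  -- Step 1 : 1 ≤ ‖e A‖ * ‖e (A+γS)⁻¹‖
  have hinvmul : (A + γ • S)⁻¹ * (A + γ • S) = 1 :=
    Matrix.nonsing_inv_mul _ ((Matrix.isUnit_iff_isUnit_det _).1 hBu)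
  have hclm : (e ((A + γ • S)⁻¹)) * (e (A + γ • S)) = 1 := by
    rw [← map_mul, hinvmul, map_one]
  set v : EuclideanSpace ℝ (Fin n) := (WithLp.equiv 2 (Fin n → ℝ)).symm x₀ with hv
  have hvne : v ≠ 0 := by
    intro h
    apply hx₀
    have := congrArg (WithLp.equiv 2 (Fin n → ℝ)) h
    simpa [hv] using this
  have hBv : e (A + γ • S) v = e A v := by
    apply PiLp.ext
    intro i
    have h1 : (e (A + γ • S) v) i = (A + γ • S).mulVec x₀ i := rfl
    have h2 : (e A v) i = A.mulVec x₀ i := rfl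
    rw [h1, h2, Matrix.add_mulVec, Matrix.smul_mulVec, hSx₀]
    simp
  have hvv : e ((A + γ • S)⁻¹) (e (A + γ • S) v) = v := by
    have := congrArg (fun f : EuclideanSpace ℝ (Fin n) →L[ℝ] EuclideanSpace ℝ (Fin n) => f v) hclm
    simpa using this
  have hstep1 : 1 ≤ ‖e A‖ * ‖e ((A + γ • S)⁻¹)‖ := by
    have hchain : ‖v‖ ≤ ‖e ((A + γ • S)⁻¹)‖ * (‖e A‖ * ‖v‖) := by
      calc ‖v‖ = ‖e ((A + γ • S)⁻¹) (e A v)‖ := by rw [← hBv, hvv]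
        _ ≤ ‖e ((A + γ • S)⁻¹)‖ * ‖e A v‖ := (e ((A + γ • S)⁻¹)).le_opNorm _
        _ ≤ ‖e ((A + γ • S)⁻¹)‖ * (‖e A‖ * ‖v‖) :=
            mul_le_mul_of_nonneg_left ((e A).le_opNorm v) (norm_nonneg _)
    have hvpos : 0 < ‖v‖ := norm_pos_iff.2 hvne
    nlinarith [hchain, hvpos]
  -- Step 2 : γ‖e S‖ ≤ ‖e (A+γS)‖
  have hstep2 : γ * ‖e S‖ ≤ ‖e (A + γ • S)‖ := by
    have hP : ∀ x, 0 ≤ x ⬝ᵥ A.mulVec x := fun x => by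
      simpa using hA.posSemidef.dotProduct_mulVec_nonneg x
    have hQ : ∀ x, 0 ≤ x ⬝ᵥ (γ • S).mulVec x := fun x => by
      simpa using hγS.dotProduct_mulVec_nonneg x
    have hQs : ∀ x y, (γ • S).mulVec x ⬝ᵥ y = x ⬝ᵥ (γ • S).mulVec y := by
      intro x y
      have hT : (γ • S)ᵀ = γ • S := by
        rw [← Matrix.conjTranspose_eq_transpose_of_trivial]
        exact hγS.1
      rw [Matrix.dotProduct_mulVec x, ← Matrix.mulVec_transpose, hT,
        dotProduct_comm]
    have hmain := aux_norm_le A (γ • S) hP hQ hQs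
    have hms : e (γ • S) = γ • e S := map_smul (Matrix.toEuclideanCLM (𝕜 := ℝ)) γ S
    have hsm : e S = γ⁻¹ • e (γ • S) := by
      rw [hms, smul_smul, inv_mul_cancel₀ hγ.ne', one_smul]
    have h2 : ‖e S‖ ≤ ‖γ⁻¹‖ * ‖e (γ • S)‖ := by
      rw [hsm]; exact ContinuousLinearMap.opNorm_smul_le _ _
    have hγn : ‖γ⁻¹‖ = γ⁻¹ := by
      rw [Real.norm_eq_abs, abs_of_pos (by positivity)]
    rw [hγn] at h2
    calc γ * ‖e S‖ ≤ γ * (γ⁻¹ * ‖e (γ • S)‖) :=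
          mul_le_mul_of_nonneg_left h2 hγ.le
      _ = ‖e (γ • S)‖ := by field_simp
      _ ≤ ‖e (A + γ • S)‖ := hmain
  -- combine
  have haA : 0 < ‖e A‖ := by
    rcases eq_or_lt_of_le (norm_nonneg (e A)) with h0 | h0
    · exfalso
      nlinarith [hstep1, norm_nonneg (e ((A + γ • S)⁻¹))]
    · exact h0
  rw [div_le_iff₀ haA]
  have hb0 : (0:ℝ) ≤ ‖e (A + γ • S)‖ := norm_nonneg _
  nlinarith [hstep2, hstep1, hb0, norm_nonneg (e ((A + γ • S)⁻¹))]
end
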